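/- Let g₁ and g₂ be elements of the coset ⟨h⟩b = { hⁱ b : i ∈ ℤ } both having order 4. Then g₁ and g₂ are conjugate in N. Consequently the elements of order 4 in ⟨h⟩b form a single conjugacy class of N. -/
import Mathlib


/-- In the abstract model `N = ⟨h⟩ ⋊ ⟨b⟩` of the normalizer of a Singer cycle of
`GL(2,q)` (with `orderOf h = q² - 1`, `orderOf b = 2`, `b h b⁻¹ = h^q`), any two
elements of order 4 in the coset `⟨h⟩b` are conjugate in `N`. -/
theorem singer_normalizer_order_four_conj
    (p k₀ : ℕ) (hp : p.Prime) (hk₀ : 1 ≤ k₀)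
    (G : Type) [Group G] (h b : G)
    (hgen : Subgroup.closure ({h, b} : Set G) = ⊤)
    (hh : orderOf h = (p ^ k₀) ^ 2 - 1)
    (hb : orderOf b = 2)
    (hrel : b * h * b⁻¹ = h ^ (p ^ k₀))
    (g₁ g₂ : G)
    (hg₁ : ∃ i : ℤ, g₁ = h ^ i * b) (hg₂ : ∃ i : ℤ, g₂ = h ^ i * b)
    (ho₁ : orderOf g₁ = 4) (ho₂ : orderOf g₂ = 4) :
    IsConj g₁ g₂ := by
  obtain ⟨i, hi⟩ := hg₁
  obtain ⟨j, hj⟩ := hg₂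
  set q : ℕ := p ^ k₀ with hqdef
  have hq2 : 2 ≤ q := by
    have := Nat.one_lt_pow (by omega : k₀ ≠ 0) hp.one_lt
    omega
  have hQcast : ((q ^ 2 - 1 : ℕ) : ℤ) = (q : ℤ) ^ 2 - 1 := by
    have h1 : 1 ≤ q ^ 2 := Nat.one_le_pow _ _ (by omega)
    push_cast [Nat.cast_sub h1]
    ring
  have hdvd : ∀ n : ℤ, h ^ n = 1 ↔ ((q : ℤ) ^ 2 - 1) ∣ n := by
    intro n
    rw [← orderOf_dvd_iff_zpow_eq_one, hh, hQcast]
  have hbb : b * b = 1 := by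
    have := pow_orderOf_eq_one b
    rwa [hb, pow_two] at this
  have hbi : b⁻¹ = b := inv_eq_of_mul_eq_one_right hbb
  have hconj : ∀ n : ℤ, b * h ^ n * b⁻¹ = h ^ ((q : ℤ) * n) := by
    intro n
    have h1 : (MulAut.conj b) (h ^ n) = ((MulAut.conj b) h) ^ n := map_zpow _ _ _
    simp only [MulAut.conj_apply] at h1
    rw [h1, hrel, ← zpow_natCast h q, ← zpow_mul]
  have hconj' : ∀ n : ℤ, b * h ^ n = h ^ ((q : ℤ) * n) * b := by
    intro n
    have hc := hconj n
    rw [hbi] at hc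
    calc b * h ^ n = b * h ^ n * b * b := by rw [mul_assoc, hbb, mul_one]
      _ = h ^ ((q : ℤ) * n) * b := by rw [hc]
  have hsq : ∀ n : ℤ, (h ^ n * b) * (h ^ n * b) = h ^ (n * ((q : ℤ) + 1)) := by
    intro n
    rw [mul_assoc, ← mul_assoc b, hconj' n, mul_assoc, hbb, mul_one, ← zpow_add]
    congr 1
    ring
  have hconjact : ∀ n t : ℤ,
      h ^ t * (h ^ n * b) * (h ^ t)⁻¹ = h ^ (n + t * (1 - (q : ℤ))) * b := by
    intro n t
    rw [← zpow_neg, ← mul_assoc, ← zpow_add, mul_assoc, hconj', ← mul_assoc, ← zpow_add]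
    congr 2
    ring
  have key : ∀ n : ℤ, orderOf (h ^ n * b) = 4 →
      ∃ u : ℤ, 2 * n = ((q : ℤ) - 1) * u ∧ ¬ (2 ∣ u) := by
    intro n hn
    have h4 : (h ^ n * b) ^ 4 = 1 := by rw [← hn]; exact pow_orderOf_eq_one _
    have h2 : (h ^ n * b) ^ 2 ≠ 1 := by
      intro hc
      have := orderOf_dvd_of_pow_eq_one hc
      rw [hn] at this
      omega
    have e2 : (h ^ n * b) ^ 2 = h ^ (n * ((q : ℤ) + 1)) := by
      rw [pow_two]; exact hsq n
    have e4 : (h ^ n * b) ^ 4 = h ^ (2 * (n * ((q : ℤ) + 1))) := by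
      have h44 : (4 : ℕ) = 2 * 2 := rfl
      rw [h44, pow_mul, e2, ← zpow_natCast (h ^ (n * ((q : ℤ) + 1))) 2, ← zpow_mul]
      congr 1
      ring
    rw [e4, hdvd] at h4
    rw [e2] at h2
    have hnd : ¬ ((q : ℤ) ^ 2 - 1) ∣ n * ((q : ℤ) + 1) := fun hc => h2 ((hdvd _).mpr hc)
    have hq1 : ((q : ℤ) + 1) ≠ 0 := by positivity
    have hd1 : ((q : ℤ) - 1) ∣ 2 * n := by
      have hstep : ((q : ℤ) - 1) * ((q : ℤ) + 1) ∣ (2 * n) * ((q : ℤ) + 1) := by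
        rw [show ((q : ℤ) - 1) * ((q : ℤ) + 1) = (q : ℤ) ^ 2 - 1 by ring,
          show (2 * n) * ((q : ℤ) + 1) = 2 * (n * ((q : ℤ) + 1)) by ring]
        exact h4
      exact (mul_dvd_mul_iff_right hq1).mp hstep
    obtain ⟨u, hu⟩ := hd1
    refine ⟨u, hu, fun hc => ?_⟩
    obtain ⟨u', hu'⟩ := hc
    apply hnd
    refine ⟨u', ?_⟩
    have h2' : 2 * (n * ((q : ℤ) + 1)) = 2 * (((q : ℤ) ^ 2 - 1) * u') := by
      calc 2 * (n * ((q : ℤ) + 1)) = (2 * n) * ((q : ℤ) + 1) := by ring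
        _ = ((q : ℤ) - 1) * u * ((q : ℤ) + 1) := by rw [hu]
        _ = 2 * (((q : ℤ) ^ 2 - 1) * u') := by rw [hu']; ring
    exact mul_left_cancel₀ two_ne_zero h2'
  obtain ⟨u, hu, hou⟩ := key i (hi ▸ ho₁)
  obtain ⟨v, hv, hov⟩ := key j (hj ▸ ho₂)
  have huv : (2 : ℤ) ∣ u - v := by omega
  obtain ⟨w, hw⟩ := huv
  have hij : i - j = ((q : ℤ) - 1) * w := by
    have h2' : 2 * (i - j) = 2 * (((q : ℤ) - 1) * w) := by
      calc 2 * (i - j) = 2 * i - 2 * j := by ring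
        _ = ((q : ℤ) - 1) * u - ((q : ℤ) - 1) * v := by rw [hu, hv]
        _ = ((q : ℤ) - 1) * (u - v) := by ring
        _ = 2 * (((q : ℤ) - 1) * w) := by rw [hw]; ring
    exact mul_left_cancel₀ two_ne_zero h2'
  rw [isConj_iff]
  refine ⟨h ^ w, ?_⟩
  rw [hi, hj, hconjact]
  have he : i + w * (1 - (q : ℤ)) = j := by linear_combination hij
  rw [he]
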